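/- (Growth bound under attack.) Under the game setup, assume each partial-gradient map F_i : E → E_i is ι-Lipschitz and x* ∈ E satisfies F(x*) = 0. Let M be any N×N real matrix with M·1_N = 0 and operator norm ‖M‖ (as a linear map on Euclidean ℝ^N). Let X̃_i = x* for all i and define G_M(X)_i = −ι_i(F_i(X_i)) − Σ_j M_{ij} X_j for X ∈ E^N. Then for every X ∈ E^N: ⟨X − X̃, G_M(X)⟩ ≤ (ι + ‖M‖)·‖X − X̃‖². Consequently, every differentiable curve x : [s,u] → E^N with x′(t) = G_M(x(t)) for all t ∈ [s,u] satisfies ‖x(u) − X̃‖ ≤ e^{(ι+‖M‖)(u−s)} ‖x(s) − X̃‖. -/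

import Mathlib

open Matrix
open scoped RealInnerProductSpace

noncomputable section

/-- The profile space `E = E_1 × ⋯ × E_N` with the product (ℓ²) inner product,
where `E_i = ℝ^{n i}`. -/
abbrev GSpace {N : ℕ} (n : Fin N → ℕ) : Type :=
  PiLp 2 (fun j : Fin N => EuclideanSpace ℝ (Fin (n j)))

/-- The stacked space `E^N` with the product (ℓ²) inner product. -/
abbrev Stacked {N : ℕ} (n : Fin N → ℕ) : Type :=
  PiLp 2 (fun _ : Fin N => GSpace n)

/-- `ι_i`: the linear embedding of `E_i` into `E` placing a vector in the `i`-th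
block and zero elsewhere. -/
def blockEmb {N : ℕ} (n : Fin N → ℕ) (i : Fin N)
    (z : EuclideanSpace ℝ (Fin (n i))) : GSpace n :=
  WithLp.toLp 2 (Pi.single i z)

/-- The operator norm of `M` as a linear map on Euclidean `ℝ^N`. -/
def euclideanOpNorm {N : ℕ} (M : Matrix (Fin N) (Fin N) ℝ) : ℝ :=
  ‖(Matrix.toEuclideanCLM (𝕜 := ℝ) M :
      EuclideanSpace ℝ (Fin N) →L[ℝ] EuclideanSpace ℝ (Fin N))‖


lemma aux_comp_norm_le {ι : Type*} [Fintype ι] (E : ι → Type*)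
    [∀ i, NormedAddCommGroup (E i)] (Y : PiLp 2 E) (i : ι) : ‖Y i‖ ≤ ‖Y‖ := by
  have h := PiLp.norm_sq_eq_of_L2 E Y
  have h1 : ‖Y i‖ ^ 2 ≤ ‖Y‖ ^ 2 := by
    rw [h]
    exact Finset.single_le_sum (f := fun j => ‖Y j‖ ^ 2) (fun j _ => by positivity)
      (Finset.mem_univ i)
  exact (pow_le_pow_iff_left₀ (norm_nonneg _) (norm_nonneg _) two_ne_zero).mp h1

lemma aux_opNorm_nonneg {N : ℕ} (M : Matrix (Fin N) (Fin N) ℝ) :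
    0 ≤ euclideanOpNorm M := norm_nonneg _

lemma aux_opNorm_neg {N : ℕ} (M : Matrix (Fin N) (Fin N) ℝ) :
    euclideanOpNorm (-M) = euclideanOpNorm M := by
  unfold euclideanOpNorm
  rw [map_neg, norm_neg]

lemma aux_quadForm_le {N : ℕ} (M : Matrix (Fin N) (Fin N) ℝ)
    (v : EuclideanSpace ℝ (Fin N)) :
    ∑ i, ∑ j, M i j * (v i * v j) ≤ euclideanOpNorm M * ∑ i, v i ^ 2 := by
  set A := (Matrix.toEuclideanCLM (𝕜 := ℝ) M :
      EuclideanSpace ℝ (Fin N) →L[ℝ] EuclideanSpace ℝ (Fin N))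
  have hAv : ∀ i, A v i = ∑ j, M i j * v j := by
    intro i
    have h2 := congrFun (Matrix.ofLp_toEuclideanCLM (𝕜 := ℝ) M v) i
    exact h2.trans (by simp [Matrix.mulVec, dotProduct])
  have h1 : ∑ i, ∑ j, M i j * (v i * v j) = ⟪v, A v⟫ := by
    rw [PiLp.inner_apply]
    simp only [hAv, RCLike.inner_apply, conj_trivial, Finset.mul_sum]
    refine Finset.sum_congr rfl fun i _ => ?_
    rw [Finset.sum_mul]
    refine Finset.sum_congr rfl fun j _ => ?_
    ring
  have h2 : ⟪v, A v⟫ ≤ ‖v‖ * ‖A v‖ := real_inner_le_norm _ _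
  have h3 : ‖A v‖ ≤ ‖A‖ * ‖v‖ := A.le_opNorm v
  have h4 : ‖v‖ ^ 2 = ∑ i, v i ^ 2 := by
    rw [EuclideanSpace.norm_eq, Real.sq_sqrt (by positivity)]
    simp [sq_abs]
  have h5 : euclideanOpNorm M = ‖A‖ := rfl
  nlinarith [norm_nonneg (A v), norm_nonneg v, norm_nonneg A]

lemma aux_blockQuad_le {N : ℕ} (n : Fin N → ℕ) (M : Matrix (Fin N) (Fin N) ℝ)
    (Y : Stacked n) :
    ∑ i, ∑ j, M i j * ⟪Y i, Y j⟫ ≤ euclideanOpNorm M * ∑ i, ‖Y i‖ ^ 2 := by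
  set b := stdOrthonormalBasis ℝ (GSpace n) with hb
  have hinner : ∀ w z : GSpace n, ⟪w, z⟫ = ∑ k, ⟪w, b k⟫ * ⟪z, b k⟫ := by
    intro w z
    rw [← b.sum_inner_mul_inner w z]
    exact Finset.sum_congr rfl fun k _ => by rw [real_inner_comm (b k) z]
  calc ∑ i, ∑ j, M i j * ⟪Y i, Y j⟫
      = ∑ i, ∑ k, ∑ j, M i j * (⟪Y i, b k⟫ * ⟪Y j, b k⟫) := by
        refine Finset.sum_congr rfl fun i _ => ?_
        rw [Finset.sum_comm]
        refine Finset.sum_congr rfl fun j _ => ?_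
        rw [hinner (Y i) (Y j), Finset.mul_sum]
    _ = ∑ k, ∑ i, ∑ j, M i j * (⟪Y i, b k⟫ * ⟪Y j, b k⟫) := Finset.sum_comm
    _ ≤ ∑ k, euclideanOpNorm M * ∑ i, ⟪Y i, b k⟫ ^ 2 := by
        refine Finset.sum_le_sum fun k _ => ?_
        exact aux_quadForm_le M (WithLp.toLp 2 (fun i => ⟪Y i, b k⟫))
    _ = euclideanOpNorm M * ∑ i, ∑ k, ⟪Y i, b k⟫ ^ 2 := by
        rw [← Finset.mul_sum, Finset.sum_comm]
    _ = euclideanOpNorm M * ∑ i, ‖Y i‖ ^ 2 := by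
        congr 1
        refine Finset.sum_congr rfl fun i _ => ?_
        calc ∑ k, ⟪Y i, b k⟫ ^ 2 = ∑ k, ⟪Y i, b k⟫ * ⟪Y i, b k⟫ :=
              Finset.sum_congr rfl fun k _ => by ring
          _ = ⟪Y i, Y i⟫ := (hinner (Y i) (Y i)).symm
          _ = ‖Y i‖ ^ 2 := real_inner_self_eq_norm_sq _

/-- **growth bound under attack.** With `ι`-Lipschitz partial
gradients, `F(x*) = 0`, and any matrix `M` with `M·1 = 0`, the attacked field
`G_M` satisfies `⟨X − X̃, G_M(X)⟩ ≤ (ι + ‖M‖)‖X − X̃‖²`, hence solutions of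
`x′ = G_M(x)` on `[s,u]` grow at most like `e^{(ι+‖M‖)(u−s)}`. -/
theorem growth_bound_under_attack
    (N : ℕ) (hN : 1 ≤ N) (n : Fin N → ℕ)
    (Fp : ∀ i : Fin N, GSpace n → EuclideanSpace ℝ (Fin (n i)))
    (F : GSpace n → GSpace n) (hFdef : ∀ x i, F x i = Fp i x)
    (ι : ℝ) (hι : 0 < ι)
    (hFpLip : ∀ i, ∀ x y : GSpace n, ‖Fp i x - Fp i y‖ ≤ ι * ‖x - y‖)
    (xstar : GSpace n) (hstar : F xstar = 0)
    (M : Matrix (Fin N) (Fin N) ℝ)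
    (hM1 : M.mulVec (fun _ => 1) = 0)
    (Xt : Stacked n) (hXt : ∀ i, Xt i = xstar)
    (GM : Stacked n → Stacked n)
    (hGM : ∀ X i, GM X i = -blockEmb n i (Fp i (X i)) - ∑ j, M i j • X j) :
    (∀ X : Stacked n,
        ⟪X - Xt, GM X⟫ ≤ (ι + euclideanOpNorm M) * ‖X - Xt‖ ^ 2) ∧
    (∀ s u : ℝ, s ≤ u → ∀ x : ℝ → Stacked n,
        (∀ t ∈ Set.Icc s u, HasDerivAt x (GM (x t)) t) →
        ‖x u - Xt‖ ≤ Real.exp ((ι + euclideanOpNorm M) * (u - s)) * ‖x s - Xt‖) := by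
  set K := ι + euclideanOpNorm M with hK
  have hK0 : 0 < K := lt_of_lt_of_le hι (le_add_of_nonneg_right (aux_opNorm_nonneg M))
  have hFp0 : ∀ i, Fp i xstar = 0 := by
    intro i
    rw [← hFdef, hstar]
    rfl
  have hrow : ∀ i, ∑ j, M i j = 0 := by
    intro i
    have h := congrFun hM1 i
    simpa [Matrix.mulVec, dotProduct] using h
  have key : ∀ X : Stacked n, ⟪X - Xt, GM X⟫ ≤ K * ‖X - Xt‖ ^ 2 := by
    intro X
    have hYi : ∀ i, (X - Xt) i = X i - xstar := by
      intro i
      rw [PiLp.sub_apply, hXt i]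
    have hterm : ∀ i, ⟪(X - Xt) i, GM X i⟫
        = -⟪(X i - xstar) i, Fp i (X i)⟫
          + ∑ j, (-M) i j * ⟪(X - Xt) i, (X - Xt) j⟫ := by
      intro i
      rw [hGM X i, hYi i]
      rw [inner_sub_right, inner_neg_right, inner_sum]
      have hblock : ⟪X i - xstar, blockEmb n i (Fp i (X i))⟫
          = ⟪(X i - xstar) i, Fp i (X i)⟫ := by
        rw [PiLp.inner_apply]
        rw [Finset.sum_eq_single i]
        · simp [blockEmb]
        · intro j _ hj
          simp [blockEmb, Pi.single_eq_of_ne hj]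
        · intro h; exact absurd (Finset.mem_univ i) h
      have hsm : ∀ j, ⟪X i - xstar, M i j • X j⟫
          = M i j * ⟪(X - Xt) i, (X - Xt) j⟫ + M i j * ⟪X i - xstar, xstar⟫ := by
        intro j
        have hsplit : ⟪X i - xstar, X j⟫
            = ⟪X i - xstar, X j - xstar⟫ + ⟪X i - xstar, xstar⟫ := by
          rw [← inner_add_right, sub_add_cancel]
        rw [real_inner_smul_right, hsplit, hYi i, hYi j, mul_add]
      rw [hblock, Finset.sum_congr rfl fun j _ => hsm j]
      rw [Finset.sum_add_distrib, ← Finset.sum_mul, hrow i, zero_mul, add_zero]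
      simp only [Matrix.neg_apply, neg_mul, Finset.sum_neg_distrib]
      simp only [hYi]
      ring
    have hfirst : ∀ i, -⟪(X i - xstar) i, Fp i (X i)⟫ ≤ ι * ‖(X - Xt) i‖ ^ 2 := by
      intro i
      have h1 : -⟪(X i - xstar) i, Fp i (X i)⟫ ≤ ‖(X i - xstar) i‖ * ‖Fp i (X i)‖ := by
        have := abs_real_inner_le_norm ((X i - xstar) i) (Fp i (X i))
        have h2 := neg_abs_le ⟪(X i - xstar) i, Fp i (X i)⟫
        linarith
      have h3 : ‖Fp i (X i)‖ ≤ ι * ‖X i - xstar‖ := by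
        have := hFpLip i (X i) xstar
        rwa [hFp0 i, sub_zero] at this
      have h4 : ‖(X i - xstar) i‖ ≤ ‖X i - xstar‖ := aux_comp_norm_le _ (X i - xstar) i
      have h5 : ‖(X i - xstar) i‖ * ‖Fp i (X i)‖ ≤ ‖X i - xstar‖ * (ι * ‖X i - xstar‖) :=
        mul_le_mul h4 h3 (norm_nonneg _) (norm_nonneg _)
      rw [hYi i]
      nlinarith [norm_nonneg (X i - xstar)]
    have hnormsq : ‖X - Xt‖ ^ 2 = ∑ i, ‖(X - Xt) i‖ ^ 2 :=
      PiLp.norm_sq_eq_of_L2 _ (X - Xt)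
    calc ⟪X - Xt, GM X⟫ = ∑ i, ⟪(X - Xt) i, GM X i⟫ := PiLp.inner_apply _ _
      _ = ∑ i, (-⟪(X i - xstar) i, Fp i (X i)⟫
            + ∑ j, (-M) i j * ⟪(X - Xt) i, (X - Xt) j⟫) :=
          Finset.sum_congr rfl fun i _ => hterm i
      _ = (∑ i, -⟪(X i - xstar) i, Fp i (X i)⟫)
            + ∑ i, ∑ j, (-M) i j * ⟪(X - Xt) i, (X - Xt) j⟫ :=
          Finset.sum_add_distrib
      _ ≤ (∑ i, ι * ‖(X - Xt) i‖ ^ 2)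
            + euclideanOpNorm (-M) * ∑ i, ‖(X - Xt) i‖ ^ 2 := by
          refine add_le_add (Finset.sum_le_sum fun i _ => hfirst i) ?_
          exact aux_blockQuad_le n (-M) (X - Xt)
      _ = K * ‖X - Xt‖ ^ 2 := by
          rw [aux_opNorm_neg, ← Finset.mul_sum, ← hnormsq, hK]
          ring
  refine ⟨key, ?_⟩
  intro s u hsu x hx
  set g : ℝ → ℝ := fun t => ‖x t - Xt‖ ^ 2 with hg
  have hgd : ∀ t ∈ Set.Icc s u,
      HasDerivAt g (2 * ⟪x t - Xt, GM (x t)⟫) t := by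
    intro t ht
    have hy : HasDerivAt (fun t => x t - Xt) (GM (x t)) t := (hx t ht).sub_const Xt
    have h2 := hy.inner ℝ hy
    have h3 : (fun t => ⟪x t - Xt, x t - Xt⟫) = g := by
      funext t
      rw [hg, real_inner_self_eq_norm_sq]
    rw [h3] at h2
    refine h2.congr_deriv ?_
    rw [real_inner_comm (GM (x t)) (x t - Xt)]
    ring
  have hgron := le_gronwallBound_of_liminf_deriv_right_le
    (f := g) (f' := fun t => 2 * ⟪x t - Xt, GM (x t)⟫)
    (δ := g s) (K := 2 * K) (ε := 0) (a := s) (b := u)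
    (fun t ht => ((hgd t ht).continuousAt).continuousWithinAt)
    (fun t ht r hr =>
      ((hgd t ⟨ht.1, le_of_lt ht.2⟩).hasDerivWithinAt.liminf_right_slope_le hr))
    le_rfl
    (fun t ht => by
      have hb := key (x t)
      rw [hg]
      simp only [add_zero]
      nlinarith)
  have hgu : g u ≤ g s * Real.exp (2 * K * (u - s)) := by
    have := hgron u ⟨hsu, le_rfl⟩
    rwa [gronwallBound_ε0] at this
  have hfinal : ‖x u - Xt‖ ^ 2 ≤ (Real.exp (K * (u - s)) * ‖x s - Xt‖) ^ 2 := by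
    have hexp : Real.exp (K * (u - s)) ^ 2 = Real.exp (2 * K * (u - s)) := by
      rw [sq, ← Real.exp_add]
      congr 1
      ring
    calc ‖x u - Xt‖ ^ 2 = g u := rfl
      _ ≤ g s * Real.exp (2 * K * (u - s)) := hgu
      _ = (Real.exp (K * (u - s)) * ‖x s - Xt‖) ^ 2 := by
          rw [mul_pow, hexp, hg]
          ring
  exact (pow_le_pow_iff_left₀ (norm_nonneg _)
    (by positivity) two_ne_zero).mp hfinal
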